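/- Let s ≥ 3 and n ≥ s. There exists a graph H on n vertices with an edge e such that H − e contains no copy of K_s, and H contains exactly ∏_{j=0}^{s-3} ⌈(n − 2 − j)/(s-2)⌉ distinct copies of K_s. -/

import Mathlib

open Finset

namespace Stmt4Aux

def v0 {m : ℕ} : Fin (m+2) := ⟨0, by omega⟩
def v1 {m : ℕ} : Fin (m+2) := ⟨1, by omega⟩

def G (k m : ℕ) : SimpleGraph (Fin (m+2)) where
  Adj a b := a ≠ b ∧ (a.val < 2 ∨ b.val < 2 ∨ (a.val - 2) % k ≠ (b.val - 2) % k)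
  symm := by constructor; intro a b h; exact ⟨h.1.symm, by tauto⟩
  loopless := by constructor; intro a h; exact h.1 rfl

def P (k m j : ℕ) : Finset (Fin (m+2)) :=
  univ.filter fun w => 2 ≤ w.val ∧ (w.val - 2) % k = j

noncomputable def Fmap (k m : ℕ) (g : ∀ j ∈ Finset.range k, Fin (m+2)) : Finset (Fin (m+2)) :=
  insert v0 (insert v1 ((Finset.range k).attach.image (fun j => g j.1 j.2)))

lemma struct (k m : ℕ) (hk : 1 ≤ k) (S : Finset (Fin (m+2))) (hcard : S.card = k+2)
    (hcl : (G k m).IsClique (S : Set (Fin (m+2)))) :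
    v0 ∈ S ∧ v1 ∈ S ∧
      ∀ j ∈ Finset.range k, ∃! w, w ∈ S ∧ (2 ≤ w.val ∧ (w.val - 2) % k = j) := by
  classical
  set T := S.filter (fun w => 2 ≤ w.val) with hT
  have hTS : T ⊆ S := filter_subset _ _
  have hsub : S \ T ⊆ {v0, v1} := by
    intro w hw
    simp only [hT, mem_sdiff, mem_filter, not_and, not_le] at hw
    have hw2 : w.val < 2 := hw.2 hw.1
    have : w.val = 0 ∨ w.val = 1 := by omega
    rcases this with h | h
    · simp [Fin.ext_iff, h, v0, v1]
    · simp [Fin.ext_iff, h, v0, v1]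
  have hST : (S \ T).card ≤ 2 := le_trans (card_le_card hsub) (by
    have := card_insert_le v0 ({v1} : Finset (Fin (m+2)))
    simpa using this)
  have hinj : Set.InjOn (fun w : Fin (m+2) => (w.val - 2) % k) T := by
    intro a ha b hb hab
    rw [mem_coe] at ha hb
    by_contra hne
    have haS : a ∈ S := hTS ha
    have hbS : b ∈ S := hTS hb
    have hadj := hcl haS hbS hne
    simp only [hT, mem_filter] at ha hb
    rcases hadj.2 with h | h | h
    · omega
    · omega
    · exact h hab
  have himsub : T.image (fun w : Fin (m+2) => (w.val - 2) % k) ⊆ Finset.range k := by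
    intro j hj
    simp only [mem_image] at hj
    obtain ⟨w, _, rfl⟩ := hj
    exact mem_range.mpr (Nat.mod_lt _ hk)
  have himcard : (T.image (fun w : Fin (m+2) => (w.val - 2) % k)).card = T.card :=
    card_image_of_injOn hinj
  have hTle : T.card ≤ k := by
    have := card_le_card himsub
    simpa [himcard] using this
  have hsd : (S \ T).card = S.card - T.card := card_sdiff_of_subset hTS
  have hTcard : T.card = k := by omega
  have hsd2 : (S \ T).card = 2 := by omega
  have heq : S \ T = {v0, v1} := eq_of_subset_of_card_le hsub (by
    have : ({v0, v1} : Finset (Fin (m+2))).card ≤ 2 := by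
      have := card_insert_le v0 ({v1} : Finset (Fin (m+2)))
      simpa using this
    omega)
  have hv0 : v0 ∈ S := by
    have : v0 ∈ S \ T := by rw [heq]; simp
    exact (mem_sdiff.mp this).1
  have hv1 : v1 ∈ S := by
    have : v1 ∈ S \ T := by rw [heq]; simp
    exact (mem_sdiff.mp this).1
  refine ⟨hv0, hv1, ?_⟩
  have himeq : T.image (fun w : Fin (m+2) => (w.val - 2) % k) = Finset.range k :=
    eq_of_subset_of_card_le himsub (by rw [himcard, hTcard, card_range])
  intro j hj
  rw [← himeq] at hj
  simp only [mem_image] at hj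
  obtain ⟨w, hwT, hwj⟩ := hj
  have hwT' := hwT
  simp only [hT, mem_filter] at hwT'
  refine ⟨w, ⟨hTS hwT, hwT'.2, hwj⟩, ?_⟩
  intro y hy
  have hyT : y ∈ T := by simp [hT, mem_filter, hy.1, hy.2.1]
  exact hinj (Finset.mem_coe.mpr hyT) (Finset.mem_coe.mpr hwT)
    (by simp only []; rw [hy.2.2, hwj])

variable {k m : ℕ}

lemma Fmap_card (g : ∀ j ∈ Finset.range k, Fin (m+2))
    (hg : ∀ j (hj : j ∈ Finset.range k), g j hj ∈ P k m j) :
    (Fmap k m g).card = k + 2 := by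
  classical
  have hg' : ∀ j (hj : j ∈ Finset.range k), 2 ≤ (g j hj).val ∧ ((g j hj).val - 2) % k = j := by
    intro j hj
    have := hg j hj
    simpa [P] using this
  have hinj : Set.InjOn (fun j : {x // x ∈ Finset.range k} => g j.1 j.2)
      ((Finset.range k).attach : Finset _) := by
    intro a _ b _ hab
    have ha := (hg' a.1 a.2).2
    have hb := (hg' b.1 b.2).2
    apply Subtype.ext
    rw [← ha, ← hb]
    simp only [] at hab
    rw [hab]
  have him : ((Finset.range k).attach.image (fun j => g j.1 j.2)).card = k := by
    rw [card_image_of_injOn hinj, card_attach, card_range]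
  have hv1n : v1 ∉ (Finset.range k).attach.image (fun j => g j.1 j.2) := by
    simp only [mem_image, mem_attach, true_and, not_exists]
    rintro ⟨j, hj⟩ h
    have := (hg' j hj).1
    rw [h] at this
    simp [v1] at this
  have hv0n : v0 ∉ insert v1 ((Finset.range k).attach.image (fun j => g j.1 j.2)) := by
    simp only [mem_insert, mem_image, mem_attach, true_and, not_or, not_exists]
    constructor
    · simp [v0, v1, Fin.ext_iff]
    · rintro ⟨j, hj⟩ h
      have := (hg' j hj).1
      rw [h] at this
      simp [v0] at this
  rw [Fmap, card_insert_of_notMem hv0n, card_insert_of_notMem hv1n, him]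

lemma Fmap_clique (g : ∀ j ∈ Finset.range k, Fin (m+2))
    (hg : ∀ j (hj : j ∈ Finset.range k), g j hj ∈ P k m j) :
    (G k m).IsClique ((Fmap k m g : Finset (Fin (m+2))) : Set (Fin (m+2))) := by
  classical
  have hg' : ∀ j (hj : j ∈ Finset.range k), 2 ≤ (g j hj).val ∧ ((g j hj).val - 2) % k = j := by
    intro j hj
    have := hg j hj
    simpa [P] using this
  intro a ha b hb hab
  rw [Finset.mem_coe, Fmap, mem_insert, mem_insert, mem_image] at ha hb
  refine ⟨hab, ?_⟩
  rcases ha with rfl | rfl | ⟨⟨j, hj⟩, -, rfl⟩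
  · left; simp [v0]
  · left; simp [v1]
  · rcases hb with rfl | rfl | ⟨⟨j', hj'⟩, -, rfl⟩
    · right; left; simp [v0]
    · right; left; simp [v1]
    · right; right
      have h1 := (hg' j hj).2
      have h2 := (hg' j' hj').2
      simp only []
      rw [h1, h2]
      intro h
      subst h
      exact hab rfl

lemma mem_Fmap_part (g : ∀ j ∈ Finset.range k, Fin (m+2))
    (hg : ∀ j (hj : j ∈ Finset.range k), g j hj ∈ P k m j)
    (w : Fin (m+2)) (hw : w ∈ Fmap k m g) (h2 : 2 ≤ w.val) {j : ℕ}
    (hp : (w.val - 2) % k = j) (hj : j ∈ Finset.range k) : w = g j hj := by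
  classical
  have hg' : ∀ j (hj : j ∈ Finset.range k), 2 ≤ (g j hj).val ∧ ((g j hj).val - 2) % k = j := by
    intro j hj
    have := hg j hj
    simpa [P] using this
  rw [Fmap, mem_insert, mem_insert, mem_image] at hw
  rcases hw with rfl | rfl | ⟨⟨j', hj'⟩, -, rfl⟩
  · simp [v0] at h2
  · simp [v1] at h2
  · have hpj : j' = j := by rw [← hp]; exact ((hg' j' hj').2).symm
    subst hpj
    rfl

lemma count_mod (k m j : ℕ) (hk : 1 ≤ k) (hj : j < k) (hjm : j < m) :
    ((Finset.range m).filter fun x => x % k = j).card = (m - j + (k-1)) / k := by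
  classical
  set c := (m - j + (k-1)) / k with hc
  have key : ∀ t : ℕ, (t < c ↔ j + t * k < m) := by
    intro t
    have h1 : t < c ↔ (t+1) * k ≤ m - j + (k-1) := by
      rw [hc, ← Nat.le_div_iff_mul_le hk]
      omega
    rw [h1]
    have : (t+1) * k = t * k + k := by ring
    rw [this]
    have := t * k
    omega
  have himg : (Finset.range m).filter (fun x => x % k = j)
      = (Finset.range c).image (fun t => j + t * k) := by
    ext x
    simp only [mem_filter, mem_range, mem_image]
    constructor
    · rintro ⟨hxm, hxk⟩
      have hcm : x / k * k = k * (x / k) := Nat.mul_comm _ _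
      refine ⟨x / k, ?_, ?_⟩
      · rw [key]
        have := Nat.div_add_mod x k
        omega
      · have := Nat.div_add_mod x k
        omega
    · rintro ⟨t, htc, rfl⟩
      rw [key] at htc
      refine ⟨htc, ?_⟩
      rw [Nat.add_mul_mod_self_right, Nat.mod_eq_of_lt hj]
  rw [himg, card_image_of_injective _ ?_, card_range]
  intro a b hab
  simp only [] at hab
  have : a * k = b * k := by omega
  exact Nat.eq_of_mul_eq_mul_right hk this

lemma ceil_eq (k d : ℕ) (hk : 1 ≤ k) :
    ⌈(d : ℚ) / (k : ℚ)⌉ = ((d + (k-1)) / k : ℕ) := by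
  set c := (d + (k-1)) / k with hc
  have h1 : d ≤ c * k ∧ c * k ≤ d + (k-1) := by
    have hdm := Nat.div_add_mod (d + (k-1)) k
    rw [← hc] at hdm
    have hmod : (d + (k-1)) % k < k := Nat.mod_lt _ hk
    have hcm : c * k = k * c := Nat.mul_comm _ _
    constructor
    · omega
    · omega
  have hkQ : (0 : ℚ) < (k : ℚ) := by positivity
  rw [Int.ceil_eq_iff]
  constructor
  · rw [lt_div_iff₀ hkQ]
    have : c * k < d + k := by omega
    push_cast
    have hcast : ((c : ℚ)) * k < (d : ℚ) + k := by exact_mod_cast this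
    linarith
  · rw [div_le_iff₀ hkQ]
    have : d ≤ c * k := h1.1
    push_cast
    exact_mod_cast this

lemma P_card (k m j : ℕ) (hk : 1 ≤ k) (hj : j < k) (hjm : j < m) :
    (P k m j).card = (m - j + (k-1)) / k := by
  classical
  rw [← count_mod k m j hk hj hjm]
  refine Finset.card_bij' (fun w _ => w.val - 2)
    (fun x hx => (⟨x + 2, by simp only [mem_filter, mem_range] at hx; omega⟩ : Fin (m+2)))
    ?_ ?_ ?_ ?_
  · intro w hw
    simp only [P, mem_filter, mem_univ, true_and] at hw
    simp only [mem_filter, mem_range]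
    exact ⟨by omega, hw.2⟩
  · intro x hx
    simp only [mem_filter, mem_range] at hx
    simp only [P, mem_filter, mem_univ, true_and]
    constructor
    · omega
    · simpa using hx.2
  · intro w hw
    simp only [P, mem_filter, mem_univ, true_and] at hw
    apply Fin.ext
    simp only []
    omega
  · intro x hx
    simp only []
    omega

end Stmt4Aux

open Stmt4Aux in
/-- For `s ≥ 3` and `n ≥ s` there is a graph `H` on `n` vertices with an edge `e`
such that `H - e` has no copy of `K_s` while `H` has exactly
`∏_{j=0}^{s-3} ⌈(n - 2 - j)/(s-2)⌉` copies of `K_s`. -/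
theorem stmt_4 (s n : ℕ) (hs : 3 ≤ s) (hn : s ≤ n) :
    ∃ (H : SimpleGraph (Fin n)) (e : Sym2 (Fin n)), e ∈ H.edgeSet ∧
      {S : Finset (Fin n) | S.card = s ∧
        (H.deleteEdges {e}).IsClique (S : Set (Fin n))} = ∅ ∧
      ({S : Finset (Fin n) | S.card = s ∧ H.IsClique (S : Set (Fin n))}.ncard : ℤ) =
        ∏ j ∈ Finset.range (s - 2), ⌈((n : ℚ) - 2 - j) / ((s : ℚ) - 2)⌉ := by
  classical
  obtain ⟨k, rfl⟩ : ∃ k, s = k + 2 := ⟨s - 2, by omega⟩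
  obtain ⟨m, rfl⟩ : ∃ m, n = m + 2 := ⟨n - 2, by omega⟩
  have hk : 1 ≤ k := by omega
  have hm : k ≤ m := by omega
  refine ⟨G k m, s(v0, v1), ?_, ?_, ?_⟩
  · rw [SimpleGraph.mem_edgeSet]
    exact ⟨by simp [v0, v1, Fin.ext_iff], Or.inl (by simp [v0])⟩
  · rw [Set.eq_empty_iff_forall_notMem]
    rintro S ⟨hcard, hcl⟩
    have hcl' : (G k m).IsClique (S : Set (Fin (m+2))) :=
      hcl.mono (SimpleGraph.deleteEdges_le _)
    obtain ⟨hv0, hv1, -⟩ := struct k m hk S hcard hcl'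
    have hne : (v0 : Fin (m+2)) ≠ v1 := by simp [v0, v1, Fin.ext_iff]
    have hadj := hcl (Finset.mem_coe.mpr hv0) (Finset.mem_coe.mpr hv1) hne
    rw [SimpleGraph.deleteEdges_adj] at hadj
    exact hadj.2 (by simp)
  · have hset : {S : Finset (Fin (m+2)) | S.card = k+2 ∧ (G k m).IsClique (S : Set (Fin (m+2)))}
        = ↑(univ.filter fun S : Finset (Fin (m+2)) =>
            S.card = k+2 ∧ (G k m).IsClique (S : Set (Fin (m+2)))) := by
      ext S
      simp
    rw [hset, Set.ncard_coe_finset]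
    set Cliq := univ.filter fun S : Finset (Fin (m+2)) =>
      S.card = k+2 ∧ (G k m).IsClique (S : Set (Fin (m+2))) with hCliq
    have hbij : ((Finset.range k).pi (fun j => P k m j)).card = Cliq.card := by
      refine Finset.card_bij (fun g _ => Fmap k m g) ?_ ?_ ?_
      · intro g hg
        rw [Finset.mem_pi] at hg
        simp only [hCliq, mem_filter, mem_univ, true_and]
        exact ⟨Fmap_card g hg, Fmap_clique g hg⟩
      · intro g1 h1 g2 h2 heq
        rw [Finset.mem_pi] at h1 h2
        funext j hj
        have hmem : g1 j hj ∈ Fmap k m g2 := by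
          rw [← heq, Fmap]
          apply mem_insert_of_mem
          apply mem_insert_of_mem
          exact mem_image.mpr ⟨⟨j, hj⟩, mem_attach _ _, rfl⟩
        have hp := h1 j hj
        simp only [P, mem_filter, mem_univ, true_and] at hp
        exact mem_Fmap_part g2 h2 _ hmem hp.1 hp.2 hj
      · intro S hS
        simp only [hCliq, mem_filter, mem_univ, true_and] at hS
        obtain ⟨hv0, hv1, hu⟩ := struct k m hk S hS.1 hS.2
        set g : ∀ j ∈ Finset.range k, Fin (m+2) :=
          fun j hj => Finset.choose _ S (hu j hj) with hgdef
        have hgP : ∀ j (hj : j ∈ Finset.range k), g j hj ∈ P k m j := by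
          intro j hj
          simp only [P, mem_filter, mem_univ, true_and]
          exact Finset.choose_property _ S (hu j hj)
        refine ⟨g, Finset.mem_pi.mpr hgP, ?_⟩
        apply eq_of_subset_of_card_le
        · intro w hw
          simp only [Fmap, mem_insert, mem_image, mem_attach, true_and] at hw
          rcases hw with rfl | rfl | ⟨⟨j, hj⟩, -, rfl⟩
          exacts [hv0, hv1, Finset.choose_mem _ S (hu j hj)]
        · rw [hS.1, Fmap_card g hgP]
    have hprod : Cliq.card = ∏ j ∈ Finset.range k, (P k m j).card := by
      rw [← hbij, Finset.card_pi]
    rw [hprod]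
    simp only [Nat.add_sub_cancel]
    rw [Nat.cast_prod]
    apply Finset.prod_congr rfl
    intro j hj
    rw [mem_range] at hj
    have hjm : j < m := lt_of_lt_of_le hj hm
    rw [P_card k m j hk hj hjm]
    have h1 : ((m + 2 : ℕ) : ℚ) - 2 - (j : ℕ) = ((m - j : ℕ) : ℚ) := by
      rw [Nat.cast_sub hjm.le]
      push_cast
      ring
    have h2 : ((k + 2 : ℕ) : ℚ) - 2 = (k : ℚ) := by
      push_cast
      ring
    rw [h1, h2, ceil_eq k (m - j) hk]
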